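/- Let (Q, Σ, δ) be a finite-state semiautomaton, let enc : Q → ℂⁿ be an injective encoding of the states, and for each σ ∈ Σ let A(σ) be an n×n complex matrix satisfying A(σ) · enc(q) = enc(δ(q, σ)) for all q ∈ Q. If the family {A(σ)}_{σ∈Σ} is simultaneously diagonalizable, then the semiautomaton is commutative: δ(δ(q, σ), τ) = δ(δ(q, τ), σ) for all q ∈ Q and all σ, τ ∈ Σ. -/
import Mathlib


open Matrix

lemma isDiag_comm {n : ℕ} {D E : Matrix (Fin n) (Fin n) ℂ}
    (hD : D.IsDiag) (hE : E.IsDiag) : D * E = E * D := by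
  rw [← hD.diagonal_diag, ← hE.diagonal_diag, diagonal_mul_diagonal,
    diagonal_mul_diagonal]
  exact congrArg diagonal (funext fun i => mul_comm _ _)

/-- If a finite-state semiautomaton `(Q, Σ, δ)` is emulated (via an injective
encoding `enc : Q → ℂⁿ`) by a selective SSM with zero input term whose transition matrices
`{A σ}` are simultaneously diagonalizable, then the semiautomaton is commutative. -/
theorem stmt1 {n : ℕ} {Q Alph : Type*} [Fintype Q] [Fintype Alph]
    (δ : Q → Alph → Q) (enc : Q → (Fin n → ℂ)) (henc : Function.Injective enc)
    (A : Alph → Matrix (Fin n) (Fin n) ℂ)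
    (hA : ∀ (σ : Alph) (q : Q), A σ *ᵥ enc q = enc (δ q σ))
    (W : Matrix (Fin n) (Fin n) ℂ) (hW : IsUnit W)
    (hdiag : ∀ σ : Alph, (W⁻¹ * A σ * W).IsDiag) :
    ∀ (q : Q) (σ τ : Alph), δ (δ q σ) τ = δ (δ q τ) σ := by
  intro q σ τ
  have hdet : IsUnit W.det := (Matrix.isUnit_iff_isUnit_det W).mp hW
  have hWW : W * W⁻¹ = 1 := Matrix.mul_nonsing_inv W hdet
  have hWW' : W⁻¹ * W = 1 := Matrix.nonsing_inv_mul W hdet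
  have key : ∀ σ' τ' : Alph,
      A σ' * A τ' = W * ((W⁻¹ * A σ' * W) * (W⁻¹ * A τ' * W)) * W⁻¹ := by
    intro σ' τ'
    have : W * ((W⁻¹ * A σ' * W) * (W⁻¹ * A τ' * W)) * W⁻¹
        = (W * W⁻¹) * A σ' * (W * W⁻¹) * A τ' * (W * W⁻¹) := by
      simp only [Matrix.mul_assoc]
    rw [this, hWW]
    simp only [Matrix.mul_assoc, Matrix.mul_one, Matrix.one_mul]
  have hcomm : A τ * A σ = A σ * A τ := by
    rw [key, key, isDiag_comm (hdiag τ) (hdiag σ)]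
  apply henc
  rw [← hA τ, ← hA σ, ← hA σ, ← hA τ, mulVec_mulVec, mulVec_mulVec, hcomm]
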